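/- Let H be a Hilbert space, P, Q commuting orthogonal projections, and T a bounded operator. The iterated commutator [P-(1-P),[Q-(1-Q),T]] is bounded with norm at most 4·max of the norms of the four operators PQ T Q⊥P⊥, PQ⊥ T Q P⊥, P⊥Q T Q⊥P, P⊥Q⊥ T Q P; conversely each of these four operators has norm at most (1/4)·‖[P-(1-P),[Q-(1-Q),T]]‖. -/
import Mathlib

open ContinuousLinearMap

section AuxIteratedCommutator

variable {H : Type*} [NormedAddCommGroup H] [InnerProductSpace ℂ H] [CompleteSpace H]

local notation "⟪" x ", " y "⟫" => @inner ℂ _ _ x y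

private lemma aux_symm' {E : H →L[ℂ] H} (hEsa : IsSelfAdjoint E) (x y : H) :
    ⟪E x, y⟫ = ⟪x, E y⟫ :=
  (isSelfAdjoint_iff_isSymmetric.mp hEsa) x y

private lemma aux_orth' {E F : H →L[ℂ] H} (hEsa : IsSelfAdjoint E) (hEF : E * F = 0)
    (y z : H) : ⟪E y, F z⟫ = 0 := by
  rw [aux_symm' hEsa]
  have h : E (F z) = 0 := by simpa [mul_apply] using DFunLike.congr_fun hEF z
  rw [h, inner_zero_right]

private lemma aux_apply_le' {E : H →L[ℂ] H} (hE : IsIdempotentElem E) (hEsa : IsSelfAdjoint E)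
    (x : H) : ‖E x‖ ≤ ‖x‖ := by
  have h2 : E (E x) = E x := by simpa [mul_apply] using DFunLike.congr_fun hE.eq x
  have h1 : (‖E x‖:ℝ)^2 = RCLike.re ⟪x, E x⟫ := by
    rw [← inner_self_eq_norm_sq (𝕜 := ℂ), aux_symm' hEsa, h2]
  have h4 : RCLike.re ⟪x, E x⟫ ≤ ‖x‖ * ‖E x‖ :=
    (RCLike.re_le_norm _).trans (norm_inner_le_norm _ _)
  nlinarith [norm_nonneg (E x), norm_nonneg x]

private lemma aux_norm_le' {E : H →L[ℂ] H} (hE : IsIdempotentElem E) (hEsa : IsSelfAdjoint E) :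
    ‖E‖ ≤ 1 := opNorm_le_bound _ zero_le_one fun x => by
      simpa using aux_apply_le' hE hEsa x

private lemma blocks_key' (E₁ E₂ E₃ E₄ T : H →L[ℂ] H)
    (h₁ : IsIdempotentElem E₁) (h₂ : IsIdempotentElem E₂)
    (h₃ : IsIdempotentElem E₃) (h₄ : IsIdempotentElem E₄)
    (s₁ : IsSelfAdjoint E₁) (s₂ : IsSelfAdjoint E₂)
    (s₃ : IsSelfAdjoint E₃) (s₄ : IsSelfAdjoint E₄)
    (h12 : E₁*E₂ = 0) (h13 : E₁*E₃ = 0) (h14 : E₁*E₄ = 0)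
    (h23 : E₂*E₃ = 0) (h24 : E₂*E₄ = 0) (h34 : E₃*E₄ = 0)
    (hsum : E₁+E₂+E₃+E₄ = 1) :
    ‖E₁*T*E₄ - E₂*T*E₃ - E₃*T*E₂ + E₄*T*E₁‖
      ≤ max (max ‖E₁*T*E₄‖ ‖E₂*T*E₃‖) (max ‖E₃*T*E₂‖ ‖E₄*T*E₁‖) := by
  set M := max (max ‖E₁*T*E₄‖ ‖E₂*T*E₃‖) (max ‖E₃*T*E₂‖ ‖E₄*T*E₁‖) with hM
  have hMa : ‖E₁*T*E₄‖ ≤ M := (le_max_left _ _).trans (le_max_left _ _)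
  have hMb : ‖E₂*T*E₃‖ ≤ M := (le_max_right _ _).trans (le_max_left _ _)
  have hMc : ‖E₃*T*E₂‖ ≤ M := (le_max_left _ _).trans (le_max_right _ _)
  have hMd : ‖E₄*T*E₁‖ ≤ M := (le_max_right _ _).trans (le_max_right _ _)
  have hM0 : (0:ℝ) ≤ M := (norm_nonneg _).trans hMa
  refine opNorm_le_bound _ hM0 fun x => ?_
  set u := (E₁*T*E₄) x with hu
  set v := (E₂*T*E₃) x with hv
  set w := (E₃*T*E₂) x with hw
  set z := (E₄*T*E₁) x with hz
  have hSx : (E₁*T*E₄ - E₂*T*E₃ - E₃*T*E₂ + E₄*T*E₁) x = u - v - w + z := by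
    simp [hu, hv, hw, hz]
  have hu' : u = E₁ (T (E₄ x)) := by simp [hu, mul_apply]
  have hv' : v = E₂ (T (E₃ x)) := by simp [hv, mul_apply]
  have hw' : w = E₃ (T (E₂ x)) := by simp [hw, mul_apply]
  have hz' : z = E₄ (T (E₁ x)) := by simp [hz, mul_apply]
  have huv : ⟪u, v⟫ = 0 := by rw [hu', hv']; exact aux_orth' s₁ h12 _ _
  have huw : ⟪u, w⟫ = 0 := by rw [hu', hw']; exact aux_orth' s₁ h13 _ _
  have huz : ⟪u, z⟫ = 0 := by rw [hu', hz']; exact aux_orth' s₁ h14 _ _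
  have hvw : ⟪v, w⟫ = 0 := by rw [hv', hw']; exact aux_orth' s₂ h23 _ _
  have hvz : ⟪v, z⟫ = 0 := by rw [hv', hz']; exact aux_orth' s₂ h24 _ _
  have hwz : ⟪w, z⟫ = 0 := by rw [hw', hz']; exact aux_orth' s₃ h34 _ _
  have e1 : ‖u - v‖^2 = ‖u‖^2 + ‖v‖^2 := by
    rw [norm_sub_sq (𝕜 := ℂ), huv]; simp
  have e2 : ⟪u - v, w⟫ = 0 := by rw [inner_sub_left, huw, hvw]; simp
  have e3 : ‖u - v - w‖^2 = ‖u‖^2 + ‖v‖^2 + ‖w‖^2 := by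
    rw [norm_sub_sq (𝕜 := ℂ), e2, e1]; simp
  have e4 : ⟪u - v - w, z⟫ = 0 := by
    rw [inner_sub_left, inner_sub_left, huz, hvz, hwz]; simp
  have hpy : ‖u - v - w + z‖^2 = ‖u‖^2 + ‖v‖^2 + ‖w‖^2 + ‖z‖^2 := by
    rw [norm_add_sq (𝕜 := ℂ), e4, e3]; simp
  have bnd : ∀ (A B : H →L[ℂ] H), IsIdempotentElem B → ‖A*T*B‖ ≤ M →
      ‖(A*T*B) x‖ ≤ M * ‖B x‖ := by
    intro A B hB hle
    have hBx : B (B x) = B x := by simpa [mul_apply] using DFunLike.congr_fun hB.eq x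
    have heq : (A*T*B) x = (A*T*B) (B x) := by simp [mul_apply, hBx]
    rw [heq]
    exact (le_opNorm _ _).trans (mul_le_mul_of_nonneg_right hle (norm_nonneg _))
  have bu : ‖u‖ ≤ M * ‖E₄ x‖ := bnd E₁ E₄ h₄ hMa
  have bv : ‖v‖ ≤ M * ‖E₃ x‖ := bnd E₂ E₃ h₃ hMb
  have bw : ‖w‖ ≤ M * ‖E₂ x‖ := bnd E₃ E₂ h₂ hMc
  have bz : ‖z‖ ≤ M * ‖E₁ x‖ := bnd E₄ E₁ h₁ hMd
  have csq : ∀ (E : H →L[ℂ] H), IsIdempotentElem E → IsSelfAdjoint E →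
      (‖E x‖:ℝ)^2 = RCLike.re ⟪x, E x⟫ := by
    intro E hE hEsa
    have h2 : E (E x) = E x := by simpa [mul_apply] using DFunLike.congr_fun hE.eq x
    rw [← inner_self_eq_norm_sq (𝕜 := ℂ), aux_symm' hEsa, h2]
  have hsq : ‖E₁ x‖^2 + ‖E₂ x‖^2 + ‖E₃ x‖^2 + ‖E₄ x‖^2 = ‖x‖^2 := by
    rw [csq E₁ h₁ s₁, csq E₂ h₂ s₂, csq E₃ h₃ s₃, csq E₄ h₄ s₄]
    have hin : ⟪x, E₁ x⟫ + ⟪x, E₂ x⟫ + ⟪x, E₃ x⟫ + ⟪x, E₄ x⟫ = ⟪x, x⟫ := by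
      rw [← inner_add_right, ← inner_add_right, ← inner_add_right]
      congr 1
      simpa using DFunLike.congr_fun hsum x
    calc RCLike.re ⟪x, E₁ x⟫ + RCLike.re ⟪x, E₂ x⟫ + RCLike.re ⟪x, E₃ x⟫ + RCLike.re ⟪x, E₄ x⟫
        = RCLike.re (⟪x, E₁ x⟫ + ⟪x, E₂ x⟫ + ⟪x, E₃ x⟫ + ⟪x, E₄ x⟫) := by simp
      _ = RCLike.re ⟪x, x⟫ := by rw [hin]
      _ = ‖x‖^2 := inner_self_eq_norm_sq (𝕜 := ℂ) x
  rw [hSx]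
  have q1 : ‖u‖^2 ≤ M^2 * ‖E₄ x‖^2 := by
    have := pow_le_pow_left₀ (norm_nonneg u) bu 2; rwa [mul_pow] at this
  have q2 : ‖v‖^2 ≤ M^2 * ‖E₃ x‖^2 := by
    have := pow_le_pow_left₀ (norm_nonneg v) bv 2; rwa [mul_pow] at this
  have q3 : ‖w‖^2 ≤ M^2 * ‖E₂ x‖^2 := by
    have := pow_le_pow_left₀ (norm_nonneg w) bw 2; rwa [mul_pow] at this
  have q4 : ‖z‖^2 ≤ M^2 * ‖E₁ x‖^2 := by
    have := pow_le_pow_left₀ (norm_nonneg z) bz 2; rwa [mul_pow] at this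
  have hfin : ‖u - v - w + z‖^2 ≤ (M * ‖x‖)^2 := by
    rw [hpy, mul_pow]
    have hr : M^2 * ‖x‖^2 = M^2*‖E₁ x‖^2 + M^2*‖E₂ x‖^2 + M^2*‖E₃ x‖^2 + M^2*‖E₄ x‖^2 := by
      rw [← hsq]; ring
    linarith [q1, q2, q3, q4]
  exact (pow_le_pow_iff_left₀ (norm_nonneg _) (mul_nonneg hM0 (norm_nonneg x)) two_ne_zero).mp hfin

private lemma sandwich₁' (E₁ E₂ E₃ E₄ T : H →L[ℂ] H)
    (h₁ : IsIdempotentElem E₁) (h₄ : IsIdempotentElem E₄)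
    (h12 : E₁*E₂ = 0) (h13 : E₁*E₃ = 0) (h14 : E₁*E₄ = 0)
    (h24 : E₂*E₄ = 0) (h34 : E₃*E₄ = 0) :
    E₁ * (E₁*T*E₄ - E₂*T*E₃ - E₃*T*E₂ + E₄*T*E₁) * E₄ = E₁*T*E₄ := by
  have expand : E₁ * (E₁*T*E₄ - E₂*T*E₃ - E₃*T*E₂ + E₄*T*E₁) * E₄
      = (E₁*E₁)*T*(E₄*E₄) - (E₁*E₂)*T*(E₃*E₄) - (E₁*E₃)*T*(E₂*E₄) + (E₁*E₄)*T*(E₁*E₄) := by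
    noncomm_ring
  rw [expand, h₁.eq, h₄.eq, h12, h13, h14, h24, h34]
  simp

private lemma sandwich₂' (E₁ E₂ E₃ E₄ T : H →L[ℂ] H)
    (h₂ : IsIdempotentElem E₂) (h₃ : IsIdempotentElem E₃)
    (h21 : E₂*E₁ = 0) (h23 : E₂*E₃ = 0) (h24 : E₂*E₄ = 0)
    (h13 : E₁*E₃ = 0) (h43 : E₄*E₃ = 0) :
    E₂ * (E₁*T*E₄ - E₂*T*E₃ - E₃*T*E₂ + E₄*T*E₁) * E₃ = -(E₂*T*E₃) := by
  have expand : E₂ * (E₁*T*E₄ - E₂*T*E₃ - E₃*T*E₂ + E₄*T*E₁) * E₃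
      = (E₂*E₁)*T*(E₄*E₃) - (E₂*E₂)*T*(E₃*E₃) - (E₂*E₃)*T*(E₂*E₃) + (E₂*E₄)*T*(E₁*E₃) := by
    noncomm_ring
  rw [expand, h₂.eq, h₃.eq, h21, h23, h24, h13, h43]
  simp

end AuxIteratedCommutator

/-- For commuting orthogonal projections `P, Q` on a complex Hilbert space and a
bounded operator `T`, the iterated commutator `[P-(1-P),[Q-(1-Q),T]]` has norm at most `4` times
the maximum of the norms of `PQ T Q⊥P⊥`, `PQ⊥ T Q P⊥`, `P⊥Q T Q⊥P`, `P⊥Q⊥ T Q P`; conversely each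
of these four operators has norm at most `(1/4)` of the norm of the iterated commutator. -/
theorem iterated_commutator_norm_equiv_four_blocks
    {H : Type*} [NormedAddCommGroup H] [InnerProductSpace ℂ H] [CompleteSpace H]
    (P Q : H →L[ℂ] H) (hP : IsIdempotentElem P) (hPsa : IsSelfAdjoint P)
    (hQ : IsIdempotentElem Q) (hQsa : IsSelfAdjoint Q)
    (hPQ : P * Q = Q * P) (T : H →L[ℂ] H) :
    ‖(P - (1 - P)) * ((Q - (1 - Q)) * T - T * (Q - (1 - Q)))
        - ((Q - (1 - Q)) * T - T * (Q - (1 - Q))) * (P - (1 - P))‖ ≤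
      4 * max (max ‖P * Q * T * (1 - Q) * (1 - P)‖ ‖P * (1 - Q) * T * Q * (1 - P)‖)
              (max ‖(1 - P) * Q * T * (1 - Q) * P‖ ‖(1 - P) * (1 - Q) * T * Q * P‖) ∧
    ‖P * Q * T * (1 - Q) * (1 - P)‖ ≤
      (1 / 4) * ‖(P - (1 - P)) * ((Q - (1 - Q)) * T - T * (Q - (1 - Q)))
        - ((Q - (1 - Q)) * T - T * (Q - (1 - Q))) * (P - (1 - P))‖ ∧
    ‖P * (1 - Q) * T * Q * (1 - P)‖ ≤
      (1 / 4) * ‖(P - (1 - P)) * ((Q - (1 - Q)) * T - T * (Q - (1 - Q)))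
        - ((Q - (1 - Q)) * T - T * (Q - (1 - Q))) * (P - (1 - P))‖ ∧
    ‖(1 - P) * Q * T * (1 - Q) * P‖ ≤
      (1 / 4) * ‖(P - (1 - P)) * ((Q - (1 - Q)) * T - T * (Q - (1 - Q)))
        - ((Q - (1 - Q)) * T - T * (Q - (1 - Q))) * (P - (1 - P))‖ ∧
    ‖(1 - P) * (1 - Q) * T * Q * P‖ ≤
      (1 / 4) * ‖(P - (1 - P)) * ((Q - (1 - Q)) * T - T * (Q - (1 - Q)))
        - ((Q - (1 - Q)) * T - T * (Q - (1 - Q))) * (P - (1 - P))‖ := by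
  have hC : Commute P Q := hPQ
  have hC1 : Commute (1-P) Q := (Commute.one_left Q).sub_left hC
  have hC2 : Commute P (1-Q) := (Commute.one_right P).sub_right hC
  have hC3 : Commute (1-P) (1-Q) := (Commute.one_right (1-P)).sub_right hC1
  -- pure ring identity for the iterated commutator (statement-order blocks)
  have hCopId : (P - (1 - P)) * ((Q - (1 - Q)) * T - T * (Q - (1 - Q)))
      - ((Q - (1 - Q)) * T - T * (Q - (1 - Q))) * (P - (1 - P))
    = (P * Q * T * (1 - Q) * (1 - P) - P * (1 - Q) * T * Q * (1 - P)
        - (1 - P) * Q * T * (1 - Q) * P + (1 - P) * (1 - Q) * T * Q * P)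
      + (P * Q * T * (1 - Q) * (1 - P) - P * (1 - Q) * T * Q * (1 - P)
        - (1 - P) * Q * T * (1 - Q) * P + (1 - P) * (1 - Q) * T * Q * P)
      + (P * Q * T * (1 - Q) * (1 - P) - P * (1 - Q) * T * Q * (1 - P)
        - (1 - P) * Q * T * (1 - Q) * P + (1 - P) * (1 - Q) * T * Q * P)
      + (P * Q * T * (1 - Q) * (1 - P) - P * (1 - Q) * T * Q * (1 - P)
        - (1 - P) * Q * T * (1 - Q) * P + (1 - P) * (1 - Q) * T * Q * P) := by
    noncomm_ring
  -- rewrite blocks into E-grouped form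
  have hA1 : P * Q * T * (1 - Q) * (1 - P) = P * Q * T * ((1-P)*(1-Q)) := by
    rw [mul_assoc (P*Q*T), hC3.symm.eq]
  have hA2 : P * (1 - Q) * T * Q * (1 - P) = P * (1-Q) * T * ((1-P)*Q) := by
    rw [mul_assoc (P*(1-Q)*T), hC1.symm.eq]
  have hA3 : (1 - P) * Q * T * (1 - Q) * P = (1-P) * Q * T * (P*(1-Q)) := by
    rw [mul_assoc ((1-P)*Q*T), hC2.symm.eq]
  have hA4 : (1 - P) * (1 - Q) * T * Q * P = (1-P) * (1-Q) * T * (P*Q) := by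
    rw [mul_assoc ((1-P)*(1-Q)*T), hC.symm.eq]
  rw [hA1, hA2, hA3, hA4] at hCopId
  rw [hA1, hA2, hA3, hA4]
  set E₁ := P*Q with hE₁
  set E₂ := P*(1-Q) with hE₂
  set E₃ := (1-P)*Q with hE₃
  set E₄ := (1-P)*(1-Q) with hE₄
  have hP' : IsIdempotentElem (1-P) := hP.one_sub
  have hQ' : IsIdempotentElem (1-Q) := hQ.one_sub
  have h₁ : IsIdempotentElem E₁ := hP.mul_of_commute hC hQ
  have h₂ : IsIdempotentElem E₂ := hP.mul_of_commute hC2 hQ'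
  have h₃ : IsIdempotentElem E₃ := hP'.mul_of_commute hC1 hQ
  have h₄ : IsIdempotentElem E₄ := hP'.mul_of_commute hC3 hQ'
  have hPsa' : IsSelfAdjoint (1-P) := (IsSelfAdjoint.one (R := H →L[ℂ] H)).sub hPsa
  have hQsa' : IsSelfAdjoint (1-Q) := (IsSelfAdjoint.one (R := H →L[ℂ] H)).sub hQsa
  have sa : ∀ (A B : H →L[ℂ] H), IsSelfAdjoint A → IsSelfAdjoint B → Commute A B →
      IsSelfAdjoint (A*B) := by
    intro A B sA sB cAB
    rw [IsSelfAdjoint, star_mul, sA.star_eq, sB.star_eq, cAB.eq]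
  have s₁ : IsSelfAdjoint E₁ := sa P Q hPsa hQsa hC
  have s₂ : IsSelfAdjoint E₂ := sa P (1-Q) hPsa hQsa' hC2
  have s₃ : IsSelfAdjoint E₃ := sa (1-P) Q hPsa' hQsa hC1
  have s₄ : IsSelfAdjoint E₄ := sa (1-P) (1-Q) hPsa' hQsa' hC3
  have mm : ∀ (a b c d : H →L[ℂ] H), Commute b c → (a*b)*(c*d) = (a*c)*(b*d) := by
    intro a b c d h
    rw [mul_assoc, ← mul_assoc b c d, h.eq, mul_assoc, ← mul_assoc]
  have hQQ' : Q*(1-Q) = 0 := by simp [mul_sub, hQ.eq]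
  have hPP' : P*(1-P) = 0 := by simp [mul_sub, hP.eq]
  have h12 : E₁*E₂ = 0 := by rw [hE₁, hE₂, mm P Q P (1-Q) hC.symm, hQQ', mul_zero]
  have h13 : E₁*E₃ = 0 := by rw [hE₁, hE₃, mm P Q (1-P) Q hC1.symm, hPP', zero_mul]
  have h14 : E₁*E₄ = 0 := by rw [hE₁, hE₄, mm P Q (1-P) (1-Q) hC1.symm, hPP', zero_mul]
  have h23 : E₂*E₃ = 0 := by rw [hE₂, hE₃, mm P (1-Q) (1-P) Q hC3.symm, hPP', zero_mul]
  have h24 : E₂*E₄ = 0 := by rw [hE₂, hE₄, mm P (1-Q) (1-P) (1-Q) hC3.symm, hPP', zero_mul]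
  have h34 : E₃*E₄ = 0 := by rw [hE₃, hE₄, mm (1-P) Q (1-P) (1-Q) hC1.symm, hQQ', mul_zero]
  have hsum : E₁+E₂+E₃+E₄ = 1 := by rw [hE₁, hE₂, hE₃, hE₄]; noncomm_ring
  have rev : ∀ {A B : H →L[ℂ] H}, IsSelfAdjoint A → IsSelfAdjoint B → A*B = 0 → B*A = 0 := by
    intro A B sA sB h
    have := congrArg star h
    simpa [star_mul, sA.star_eq, sB.star_eq] using this
  have h21 : E₂*E₁ = 0 := rev s₁ s₂ h12
  have h31 : E₃*E₁ = 0 := rev s₁ s₃ h13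
  have h41 : E₄*E₁ = 0 := rev s₁ s₄ h14
  have h32 : E₃*E₂ = 0 := rev s₂ s₃ h23
  have h42 : E₄*E₂ = 0 := rev s₂ s₄ h24
  have h43 : E₄*E₃ = 0 := rev s₃ s₄ h34
  set S := E₁*T*E₄ - E₂*T*E₃ - E₃*T*E₂ + E₄*T*E₁ with hS
  set Cop := (P - (1 - P)) * ((Q - (1 - Q)) * T - T * (Q - (1 - Q)))
      - ((Q - (1 - Q)) * T - T * (Q - (1 - Q))) * (P - (1 - P)) with hCopDef
  have h4 : S + S + S + S = (4:ℝ) • S := by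
    rw [show (4:ℝ) = 2 + 2 by norm_num, add_smul, two_smul]; abel
  have hnorm : ‖Cop‖ = 4 * ‖S‖ := by
    rw [hCopId, h4, norm_smul]
    simp
  have hkey : ‖S‖ ≤ max (max ‖E₁*T*E₄‖ ‖E₂*T*E₃‖) (max ‖E₃*T*E₂‖ ‖E₄*T*E₁‖) :=
    blocks_key' E₁ E₂ E₃ E₄ T h₁ h₂ h₃ h₄ s₁ s₂ s₃ s₄ h12 h13 h14 h23 h24 h34 hsum
  have hNS : (0:ℝ) ≤ ‖S‖ := norm_nonneg _
  -- converse bounds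
  have conv : ∀ (A B : H →L[ℂ] H), IsIdempotentElem A → IsSelfAdjoint A →
      IsIdempotentElem B → IsSelfAdjoint B → ‖A * S * B‖ ≤ ‖S‖ := by
    intro A B hA hAsa hB hBsa
    calc ‖A * S * B‖ ≤ ‖A * S‖ * ‖B‖ := norm_mul_le _ _
      _ ≤ ‖A * S‖ := mul_le_of_le_one_right (norm_nonneg _) (aux_norm_le' hB hBsa)
      _ ≤ ‖A‖ * ‖S‖ := norm_mul_le _ _
      _ ≤ ‖S‖ := mul_le_of_le_one_left hNS (aux_norm_le' hA hAsa)
  have hS14 : E₁ * S * E₄ = E₁*T*E₄ :=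
    sandwich₁' E₁ E₂ E₃ E₄ T h₁ h₄ h12 h13 h14 h24 h34
  have hS23 : E₂ * S * E₃ = -(E₂*T*E₃) :=
    sandwich₂' E₁ E₂ E₃ E₄ T h₂ h₃ h21 h23 h24 h13 h43
  have hS' : S = E₄*T*E₁ - E₃*T*E₂ - E₂*T*E₃ + E₁*T*E₄ := by rw [hS]; abel
  have hS41 : E₄ * S * E₁ = E₄*T*E₁ := by
    rw [hS']
    exact sandwich₁' E₄ E₃ E₂ E₁ T h₄ h₁ h43 h42 h41 h31 h21
  have hS32 : E₃ * S * E₂ = -(E₃*T*E₂) := by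
    rw [hS']
    exact sandwich₂' E₄ E₃ E₂ E₁ T h₃ h₂ h34 h32 h31 h42 h12
  have c1 : ‖E₁*T*E₄‖ ≤ ‖S‖ := by rw [← hS14]; exact conv E₁ E₄ h₁ s₁ h₄ s₄
  have c2 : ‖E₂*T*E₃‖ ≤ ‖S‖ := by
    rw [← norm_neg, ← hS23]; exact conv E₂ E₃ h₂ s₂ h₃ s₃
  have c3 : ‖E₃*T*E₂‖ ≤ ‖S‖ := by
    rw [← norm_neg, ← hS32]; exact conv E₃ E₂ h₃ s₃ h₂ s₂
  have c4 : ‖E₄*T*E₁‖ ≤ ‖S‖ := by rw [← hS41]; exact conv E₄ E₁ h₄ s₄ h₁ s₁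
  refine ⟨?_, ?_, ?_, ?_, ?_⟩
  · rw [hnorm]; linarith [hkey]
  · rw [hnorm]; linarith [c1]
  · rw [hnorm]; linarith [c2]
  · rw [hnorm]; linarith [c3]
  · rw [hnorm]; linarith [c4]
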